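/- Let G be an (e,d)-depth-robust DAG. Then the cumulative complexity of parallel pebbling of G satisfies Π_cc^||(G) > e·d. -/

import Mathlib

/-- The rank of bit `i` in the binary word `B`: the number of indices `j < i`
with `B j = B i`. -/
def wordRank (B : ℕ → Bool) (i : ℕ) : ℕ :=
  ((Finset.range i).filter fun j => B j = B i).card

/-- The Hamming weight of a binary word of length `n`. -/
def hammingWeight (n : ℕ) (B : ℕ → Bool) : ℕ :=
  ((Finset.range n).filter fun j => B j = true).card

/-- The bitwise complement of a binary word. -/
def wordCompl (B : ℕ → Bool) : ℕ → Bool := fun i => !(B i)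

/-- The Riffle-Permutation induced by a binary word `B` of length `n`:
`π_B i = r_B i` if `B i = 0` and `π_B i = r_B i + HW(B̄)` if `B i = 1`. -/
def rifflePerm (n : ℕ) (B : ℕ → Bool) (i : ℕ) : ℕ :=
  if B i = true then wordRank B i + hammingWeight n (wordCompl B) else wordRank B i

/-- The binary word obtained by rearranging the entries of `X` (of length `n`)
according to the permutation `P`: the entry at position `p` is moved to position `P p`. -/
def permWord (n : ℕ) (P : ℕ → ℕ) (X : ℕ → Bool) : ℕ → Bool :=
  fun q => decide (∃ p, p < n ∧ P p = q ∧ X p = true)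

/-- The binary-representation matrix of `σ` (a permutation of `{0,…,2^g-1}`):
the `j`-th row is the `g`-bit binary representation of `σ j` (most significant bit first),
and `binRep g σ i j` is the entry in column `i`, row `j`. -/
def binRep (g : ℕ) (σ : ℕ → ℕ) : ℕ → ℕ → Bool :=
  fun i j => Nat.testBit (σ j) (g - 1 - i)

/-- `TraceTrajectories`: `𝔅_0 = B_0` and `𝔅_i = π_{𝔅_{i-1}}(B_i)`. -/
def traceTraj (g : ℕ) (B : ℕ → ℕ → Bool) : ℕ → ℕ → Bool
  | 0 => B 0
  | i + 1 => permWord (2 ^ g) (rifflePerm (2 ^ g) (traceTraj g B i)) (B (i + 1))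

/-- The position, after `i` rounds, of the trajectory started at input `j`,
where round `i` applies the Riffle-Permutation induced by the word `W i`. -/
def trajPos (g : ℕ) (W : ℕ → ℕ → Bool) (j : ℕ) : ℕ → ℕ
  | 0 => j
  | i + 1 => rifflePerm (2 ^ g) (W i) (trajPos g W j i)

/-- Sequential (horizontal and wrap-around) edges of the `2^g`-Double-Riffle-Graph,
on vertices `(i, j)` representing `v_i^j`. -/
def drgSeqEdge (g : ℕ) (u v : ℕ × ℕ) : Prop :=
  (v.2 = u.2 ∧ u.2 ≤ 2 * g ∧ v.1 = u.1 + 1 ∧ v.1 < 2 ^ g) ∨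
  (u.1 = 2 ^ g - 1 ∧ v.1 = 0 ∧ v.2 = u.2 + 1 ∧ u.2 < 2 * g)

/-- Permutation edges of the `2^g`-Double-Riffle-Graph built from the binary words
`Bs 1, …, Bs g` (of length `2^g` each): the upper-layer edges
`v_i^{j-1} → v_{π_{B_j}(i)}^j` and `v_i^{j-1} → v_{π_{B̄_j}(i)}^j` for `1 ≤ j ≤ g`, and
the mirrored lower-layer edges `v_{π_{B_j}^{-1}(i)}^{2g-j} → v_i^{2g-j+1}` and
`v_i^{2g-j} → v_{π_{B_j}^{-1}(i)}^{2g-j+1}` (phrased via `π_{B_j}` directly). -/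
def drgPermEdge (g : ℕ) (Bs : ℕ → ℕ → Bool) (u v : ℕ × ℕ) : Prop :=
  u.1 < 2 ^ g ∧ v.1 < 2 ^ g ∧
  ((∃ j, 1 ≤ j ∧ j ≤ g ∧ u.2 = j - 1 ∧ v.2 = j ∧
      (v.1 = rifflePerm (2 ^ g) (Bs j) u.1 ∨ v.1 = rifflePerm (2 ^ g) (wordCompl (Bs j)) u.1)) ∨
   (∃ j, 1 ≤ j ∧ j ≤ g ∧ u.2 = 2 * g - j ∧ v.2 = 2 * g - j + 1 ∧
      (rifflePerm (2 ^ g) (Bs j) u.1 = v.1 ∨ rifflePerm (2 ^ g) (Bs j) v.1 = u.1)))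

/-- The edge relation of the `2^g`-Double-Riffle-Graph built from words `Bs 1, …, Bs g`. -/
def drgEdge (g : ℕ) (Bs : ℕ → ℕ → Bool) (u v : ℕ × ℕ) : Prop :=
  drgSeqEdge g u v ∨ drgPermEdge g Bs u v

/-- The words `B_j := 𝔅_{j-1}` (for `1 ≤ j ≤ g`) used for the Double-Riffle-Graph built
from the columns of `TraceTrajectories` of the binary representation of `σ`. -/
def drgWords (g : ℕ) (σ : ℕ → ℕ) : ℕ → ℕ → Bool :=
  fun j => traceTraj g (binRep g σ) (j - 1)

/-- Vertex set of the `2^g`-Double-Riffle-Graph. -/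
def drgVerts (g : ℕ) : Finset (ℕ × ℕ) :=
  Finset.range (2 ^ g) ×ˢ Finset.range (2 * g + 1)

/-- Input vertices `v_i^0`. -/
def drgInputs (g : ℕ) : Finset (ℕ × ℕ) := (Finset.range (2 ^ g)).image fun i => (i, 0)

/-- Output vertices `v_i^{2g}`. -/
def drgOutputs (g : ℕ) : Finset (ℕ × ℕ) := (Finset.range (2 ^ g)).image fun i => (i, 2 * g)

/-- The `(2^g, lam)`-Double-Riffle-Graph: `lam` stacked `2^g`-Double-Riffle-Graphs,
the `m`-th copy (built from the permutation `σs m`) occupying layers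
`2*g*m, …, 2*g*(m+1)`, outputs of each copy identified with inputs of the next. -/
def rsgEdge (g lam : ℕ) (σs : ℕ → ℕ → ℕ) (u v : ℕ × ℕ) : Prop :=
  ∃ m, m < lam ∧ 2 * g * m ≤ u.2 ∧ 2 * g * m ≤ v.2 ∧
    drgEdge g (drgWords g (σs m)) (u.1, u.2 - 2 * g * m) (v.1, v.2 - 2 * g * m)

/-- Vertex set of the `(2^g, lam)`-Double-Riffle-Graph. -/
def rsgVerts (g lam : ℕ) : Finset (ℕ × ℕ) :=
  Finset.range (2 ^ g) ×ˢ Finset.range (2 * g * lam + 1)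

/-- The row of `2^g` vertices in layer `j`. -/
def rsgRow (g j : ℕ) : Finset (ℕ × ℕ) := (Finset.range (2 ^ g)).image fun i => (i, j)

/-- `k` vertex-disjoint directed paths connecting `S` to `T`. -/
def HasDisjointPaths {V : Type*} (E : V → V → Prop) (S T : Set V) (k : ℕ) : Prop :=
  ∃ f : Fin k → List V,
    (∀ a, (f a).Chain' E ∧ ∃ h : f a ≠ [], (f a).head h ∈ S ∧ (f a).getLast h ∈ T) ∧
    ∀ a b, a ≠ b → ∀ x ∈ f a, x ∉ f b

/-- `N`-Superconcentrator with designated inputs and outputs. -/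
def IsSuperconcentratorOn {V : Type*} (E : V → V → Prop) (inp out : Finset V) (N : ℕ) : Prop :=
  inp.card = N ∧ out.card = N ∧
    ∀ k, 1 ≤ k → k ≤ N → ∀ S ⊆ inp, ∀ T ⊆ out, S.card = k → T.card = k →
      HasDisjointPaths E (↑S) (↑T) k

/-- `(N, lam)`-Superconcentrator: `lam` stacked `N`-Superconcentrators, the outputs of each
copy identified with the inputs of the next one. -/
def IsStackedSuperconcentrator {V : Type*} (E : V → V → Prop) (verts : Finset V)
    (N lam : ℕ) (inp out : Finset V) : Prop :=
  ∃ (Pt : ℕ → Finset V) (W : ℕ → Finset V),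
    W 0 = inp ∧ W lam = out ∧
    (∀ i ≤ lam, W i ⊆ verts ∧ (W i).card = N) ∧
    (∀ i < lam, Pt i ⊆ verts ∧ W i ⊆ Pt i ∧ W (i + 1) ⊆ Pt i) ∧
    (∀ x ∈ verts, ∃ i < lam, x ∈ Pt i) ∧
    (∀ i < lam, ∀ j < lam, i < j → ∀ x, x ∈ Pt i → x ∈ Pt j → j = i + 1 ∧ x ∈ W j) ∧
    (∀ u v, E u v → u ∈ verts ∧ v ∈ verts ∧ ∃ i < lam, u ∈ Pt i ∧ v ∈ Pt i) ∧
    (∀ i < lam,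
      IsSuperconcentratorOn (fun u v => E u v ∧ u ∈ Pt i ∧ v ∈ Pt i) (W i) (W (i + 1)) N)

/-- A legal sequential pebbling of the graph `(verts, E)` with target set `Tset`,
given as a sequence of configurations `P 0, …, P t`. -/
def IsSeqPebbling {V : Type*} [DecidableEq V] (E : V → V → Prop) (verts Tset : Finset V)
    (P : ℕ → Finset V) (t : ℕ) : Prop :=
  P 0 = ∅ ∧ (∀ i ≤ t, P i ⊆ verts) ∧
    (∀ x ∈ Tset, ∃ z ≤ t, x ∈ P z) ∧
    (∀ i, 1 ≤ i → i ≤ t → ∀ x ∈ P i \ P (i - 1), ∀ u ∈ verts, E u x → u ∈ P (i - 1)) ∧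
    (∀ i, 1 ≤ i → i ≤ t → (P i \ P (i - 1)).card ≤ 1)

/-- A legal parallel pebbling of the graph `(verts, E)` with target set `Tset`. -/
def IsParPebbling {V : Type*} [DecidableEq V] (E : V → V → Prop) (verts Tset : Finset V)
    (P : ℕ → Finset V) (t : ℕ) : Prop :=
  P 0 = ∅ ∧ (∀ i ≤ t, P i ⊆ verts) ∧
    (∀ x ∈ Tset, ∃ z ≤ t, x ∈ P z) ∧
    (∀ i, 1 ≤ i → i ≤ t → ∀ x ∈ P i \ P (i - 1), ∀ u ∈ verts, E u x → u ∈ P (i - 1))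

/-- The space used by a pebbling: the maximal number of pebbles on the graph. -/
def pebSpace {V : Type*} (P : ℕ → Finset V) (t : ℕ) : ℕ :=
  (Finset.range (t + 1)).sup fun i => (P i).card

/-- The number of pebble placements made by a pebbling. -/
def pebPlacements {V : Type*} [DecidableEq V] (P : ℕ → Finset V) (t : ℕ) : ℕ :=
  ∑ i ∈ Finset.range t, (P (i + 1) \ P i).card

/-- The cumulative complexity of a pebbling. -/
def pebCC {V : Type*} (P : ℕ → Finset V) (t : ℕ) : ℕ :=
  ∑ i ∈ Finset.range (t + 1), (P i).card

/-- `(e, d)`-depth-robustness: after removing any set `S` of at most `e` nodes, the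
remaining graph contains a directed path of length at least `d` (length counted as the
number of nodes on the path). -/
def IsDepthRobust {V : Type*} (E : V → V → Prop) (verts : Finset V) (e d : ℕ) : Prop :=
  ∀ S : Finset V, S ⊆ verts → S.card ≤ e →
    ∃ p : List V, p ≠ [] ∧ p.Chain' E ∧ (∀ x ∈ p, x ∈ verts ∧ x ∉ S) ∧ d ≤ p.length


private lemma descent_lemma {V : Type*} [DecidableEq V] (E : V → V → Prop) (verts : Finset V)
    (P : ℕ → Finset V) (t : ℕ) (hP0 : P 0 = ∅)
    (hlegal : ∀ i, 1 ≤ i → i ≤ t → ∀ x ∈ P i \ P (i - 1), ∀ u ∈ verts, E u x → u ∈ P (i - 1))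
    (l : List V) (hch : l.Chain' E) (hmem : ∀ x ∈ l, x ∈ verts)
    (z : ℕ) (hzt : z ≤ t) (k : ℕ) (hk : k < l.length) (hkP : l.get ⟨k, hk⟩ ∈ P z) :
    ∀ j, j ≤ k → ∃ q, ∃ hq : q < l.length, k - j ≤ q ∧ l.get ⟨q, hq⟩ ∈ P (z - j) ∧ 1 ≤ z - j := by
  intro j
  induction j with
  | zero =>
    intro _
    refine ⟨k, hk, by omega, by simpa using hkP, ?_⟩
    by_contra h
    have hz0 : z = 0 := by omega
    rw [hz0, hP0] at hkP
    exact absurd hkP (Finset.notMem_empty _)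
  | succ j ihj =>
    intro hjk
    obtain ⟨q, hq, hkjq, hqP, hz1⟩ := ihj (by omega)
    have hq1 : 1 ≤ q := by omega
    obtain ⟨q', rfl⟩ : ∃ q', q = q' + 1 := ⟨q - 1, by omega⟩
    by_cases hcase : l.get ⟨q' + 1, hq⟩ ∈ P (z - (j + 1))
    · refine ⟨q' + 1, hq, by omega, hcase, ?_⟩
      by_contra h
      have h0 : z - (j + 1) = 0 := by omega
      rw [h0, hP0] at hcase
      exact absurd hcase (Finset.notMem_empty _)
    · have hq'lt : q' < l.length := by omega
      have hedge : E (l.get ⟨q', hq'lt⟩) (l.get ⟨q' + 1, hq⟩) :=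
        List.isChain_iff_getElem.mp hch q' (by omega)
      have hx : l.get ⟨q' + 1, hq⟩ ∈ P (z - j) \ P (z - j - 1) :=
        Finset.mem_sdiff.mpr ⟨hqP, by
          rw [show z - j - 1 = z - (j + 1) from by omega]; exact hcase⟩
      have hu := hlegal (z - j) hz1 (by omega) _ hx _ (hmem _ (List.get_mem _ _)) hedge
      rw [show z - j - 1 = z - (j + 1) from by omega] at hu
      refine ⟨q', hq'lt, by omega, hu, ?_⟩
      by_contra h
      have h0 : z - (j + 1) = 0 := by omega
      rw [h0, hP0] at hu
      exact absurd hu (Finset.notMem_empty _)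

private lemma offset_arith (d a z : ℕ) (ha : a < d) (hz : d ≤ z) :
    (z - (z - a) % d) % d = a := by
  have haz : a ≤ z := by omega
  have h1 : d * ((z - a) / d) + (z - a) % d = z - a := Nat.div_add_mod _ _
  have hmle : (z - a) % d ≤ z - a := Nat.mod_le _ _
  have key : z - (z - a) % d = a + d * ((z - a) / d) := by
    generalize hM : d * ((z - a) / d) = M at h1
    generalize hR : (z - a) % d = R at hmle h1 ⊢
    omega
  rw [key, Nat.add_mul_mod_self_left, Nat.mod_eq_of_lt ha]

/-- Let `G` be an `(e, d)`-depth-robust DAG. Then the cumulative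
complexity of parallel pebbling of `G` satisfies `Π_cc^∥(G) > e·d`: every legal parallel
pebbling of `G` with target set its sinks has cumulative complexity greater than
`e·d`. -/
theorem depth_robust_parallel_cc_lower_bound {V : Type*} [DecidableEq V]
    (E : V → V → Prop) (verts : Finset V)
    (topo : V → ℕ) (htopo : ∀ u v, E u v → topo u < topo v)  -- G is acyclic
    (e d : ℕ) (hdr : IsDepthRobust E verts e d)
    (Tset : Finset V)
    (hT : ∀ x, x ∈ Tset ↔ x ∈ verts ∧ ∀ u ∈ verts, ¬ E x u)   -- targets are the sinks
    (P : ℕ → Finset V) (t : ℕ) (hpeb : IsParPebbling E verts Tset P t) :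
    e * d < pebCC P t := by
  classical
  obtain ⟨hP0, hsub, htar, hlegal⟩ := hpeb
  -- every vertex of `verts` gets pebbled at some time ≤ t
  have allPlaced : ∀ v ∈ verts, ∃ z, z ≤ t ∧ v ∈ P z := by
    have key : ∀ n, ∀ v ∈ verts,
        (verts.filter fun w => topo v < topo w).card < n → ∃ z, z ≤ t ∧ v ∈ P z := by
      intro n
      induction n with
      | zero => intro v hv h; omega
      | succ n ih =>
        intro v hv hcard
        by_cases hsink : ∀ u ∈ verts, ¬ E v u
        · have hvT : v ∈ Tset := (hT v).mpr ⟨hv, hsink⟩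
          obtain ⟨z, hz, hvz⟩ := htar v hvT
          exact ⟨z, hz, hvz⟩
        · push_neg at hsink
          obtain ⟨u, hu, hEu⟩ := hsink
          have hssub : (verts.filter fun w => topo u < topo w) ⊂
              (verts.filter fun w => topo v < topo w) := by
            constructor
            · intro w hw
              simp only [Finset.mem_filter] at hw ⊢
              exact ⟨hw.1, lt_trans (htopo v u hEu) hw.2⟩
            · intro hcon
              have hmemu : u ∈ (verts.filter fun w => topo v < topo w) :=
                Finset.mem_filter.mpr ⟨hu, htopo v u hEu⟩
              have := hcon hmemu
              simp only [Finset.mem_filter] at this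
              exact lt_irrefl _ this.2
          have hlt : (verts.filter fun w => topo u < topo w).card < n := by
            have := Finset.card_lt_card hssub
            omega
          obtain ⟨z, hz, huz⟩ := ih u hu hlt
          have hex : ∃ m, u ∈ P m := ⟨z, huz⟩
          have hz0mem : u ∈ P (Nat.find hex) := Nat.find_spec hex
          have hz0le : Nat.find hex ≤ z := Nat.find_min' hex huz
          have hz0pos : 1 ≤ Nat.find hex := by
            by_contra h
            have h0 : Nat.find hex = 0 := by omega
            rw [h0, hP0] at hz0mem
            exact absurd hz0mem (Finset.notMem_empty u)
          have hnot : u ∉ P (Nat.find hex - 1) := Nat.find_min hex (by omega)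
          have hvmem := hlegal (Nat.find hex) hz0pos (le_trans hz0le hz) u
            (Finset.mem_sdiff.mpr ⟨hz0mem, hnot⟩) v hv hEu
          exact ⟨Nat.find hex - 1, by omega, hvmem⟩
    intro v hv
    exact key ((verts.filter fun w => topo v < topo w).card + 1) v hv (Nat.lt_succ_self _)
  by_contra hcc
  push_neg at hcc
  rcases Nat.eq_zero_or_pos d with hd0 | hdpos
  · -- d = 0 : just need one pebble ever placed
    obtain ⟨p, hpne, -, hpmem, -⟩ := hdr ∅ (Finset.empty_subset _) (by simp)
    obtain ⟨v, hv⟩ := List.exists_mem_of_ne_nil p hpne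
    obtain ⟨z, hzt, hvz⟩ := allPlaced v (hpmem v hv).1
    have h1 : 1 ≤ (P z).card := Finset.card_pos.mpr ⟨v, hvz⟩
    have h2 : (P z).card ≤ pebCC P t := by
      apply Finset.single_le_sum (f := fun i => (P i).card) (fun i _ => Nat.zero_le _)
      simp only [Finset.mem_range]
      omega
    have h3 : e * d = 0 := by rw [hd0, Nat.mul_zero]
    omega
  · have hIcc : ∑ i ∈ Finset.Icc 1 t, (P i).card ≤ e * d := by
      refine le_trans (Finset.sum_le_sum_of_subset ?_) hcc
      intro i hi
      simp only [Finset.mem_Icc] at hi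
      simp only [Finset.mem_range]
      omega
    have hfib : ∑ a ∈ Finset.range d,
        ∑ i ∈ (Finset.Icc 1 t).filter (fun i => i % d = a), (P i).card
        = ∑ i ∈ Finset.Icc 1 t, (P i).card := by
      apply Finset.sum_fiberwise_of_maps_to
      intro i _
      exact Finset.mem_range.mpr (Nat.mod_lt _ hdpos)
    have hex : ∃ a ∈ Finset.range d,
        ∑ i ∈ (Finset.Icc 1 t).filter (fun i => i % d = a), (P i).card ≤ e := by
      by_contra hcon
      push_neg at hcon
      have hpt : ∀ a ∈ Finset.range d, e + 1 ≤
          ∑ i ∈ (Finset.Icc 1 t).filter (fun i => i % d = a), (P i).card :=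
        fun a ha => hcon a ha
      have hge : d * (e + 1) ≤ ∑ a ∈ Finset.range d,
          ∑ i ∈ (Finset.Icc 1 t).filter (fun i => i % d = a), (P i).card := by
        calc d * (e + 1) = ∑ _a ∈ Finset.range d, (e + 1) := by
              rw [Finset.sum_const, Finset.card_range, smul_eq_mul]
          _ ≤ _ := Finset.sum_le_sum hpt
      rw [hfib] at hge
      have hle := le_trans hge hIcc
      have hexp : d * (e + 1) = e * d + d := by ring
      omega
    obtain ⟨a, haR, hasum⟩ := hex
    have ha : a < d := Finset.mem_range.mp haR
    have hSsub : ((Finset.Icc 1 t).filter (fun i => i % d = a)).biUnion (fun i => P i) ⊆ verts := by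
      intro x hx
      rw [Finset.mem_biUnion] at hx
      obtain ⟨i, hi, hxi⟩ := hx
      have hit : i ≤ t := (Finset.mem_Icc.mp (Finset.mem_filter.mp hi).1).2
      exact hsub i hit hxi
    have hScard : (((Finset.Icc 1 t).filter (fun i => i % d = a)).biUnion (fun i => P i)).card ≤ e :=
      le_trans Finset.card_biUnion_le hasum
    obtain ⟨p, hpne, hpch, hpmem, hplen⟩ := hdr _ hSsub hScard
    have hdk : d - 1 < p.length := by omega
    obtain ⟨z, hzt, hvz⟩ := allPlaced (p.get ⟨d - 1, hdk⟩) (hpmem _ (List.get_mem _ _)).1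
    have hdesc := descent_lemma E verts P t hP0 hlegal p hpch (fun x hx => (hpmem x hx).1)
      z hzt (d - 1) hdk hvz
    obtain ⟨q', hq', -, -, hzd⟩ := hdesc (d - 1) le_rfl
    have hzged : d ≤ z := by omega
    have hj0lt : (z - a) % d < d := Nat.mod_lt _ hdpos
    obtain ⟨q, hq, -, hqP, hz1⟩ := hdesc ((z - a) % d) (by omega)
    have hmod : (z - (z - a) % d) % d = a := offset_arith d a z ha hzged
    have hi0t : z - (z - a) % d ≤ t := by omega
    have hxS : p.get ⟨q, hq⟩ ∈
        ((Finset.Icc 1 t).filter (fun i => i % d = a)).biUnion (fun i => P i) := by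
      rw [Finset.mem_biUnion]
      exact ⟨z - (z - a) % d,
        Finset.mem_filter.mpr ⟨Finset.mem_Icc.mpr ⟨hz1, hi0t⟩, hmod⟩, hqP⟩
    exact (hpmem _ (List.get_mem _ _)).2 hxS
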